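/- arXiv:0807.4099 — 3 statements merged into one kernel-verified Lean document; each statement's English description precedes it below -/
import Mathlib

section
/- Every point of the hypersurface W = {(s1, s2, s3, t) in C^4 : t^2/4 - (s3/2 + 2*s1)^2 + (s2 + 4)^2 = 0} lies in the image of the map F from (C*)^3 to C^4 sending (v1, v2, v3) to (s1, s2, s3, t) with u_i = v_i + 1/v_i, s1 = u1 + u2 + u3, s2 = u1*u2 + u1*u3 + u2*u3, s3 = u1*u2*u3, and t = (v1 - 1/v1)(v2 - 1/v2)(v3 - 1/v3). -/
open Polynomial in
/-- Roots of a monic cubic over ℂ: any `(s1,s2,s3)` arises as elementary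
symmetric functions of three complex numbers. -/
lemma cubic_roots (s1 s2 s3 : ℂ) :
    ∃ u1 u2 u3 : ℂ, s1 = u1 + u2 + u3 ∧ s2 = u1*u2 + u1*u3 + u2*u3 ∧
      s3 = u1*u2*u3 := by
  -- quadratic case helper
  have quad : ∀ a b : ℂ, ∃ x y : ℂ, x + y = a ∧ x * y = b := by
    intro a b
    obtain ⟨d, hd⟩ := IsAlgClosed.exists_pow_nat_eq (k := ℂ) (a^2 - 4*b) (n := 2) (by norm_num)
    exact ⟨(a+d)/2, (a-d)/2, by ring, by linear_combination -hd/4⟩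
  obtain ⟨u1, hu1⟩ : ∃ u : ℂ, u^3 - s1*u^2 + s2*u - s3 = 0 := by
    have hdeg : (C 1 * X^3 + C (-s1) * X^2 + C s2 * X + C (-s3) : ℂ[X]).degree = 3 :=
      Polynomial.degree_cubic one_ne_zero
    obtain ⟨u, hu⟩ := Complex.exists_root (f := C 1 * X^3 + C (-s1) * X^2 + C s2 * X + C (-s3))
      (by rw [hdeg]; norm_num)
    refine ⟨u, ?_⟩
    have := hu
    simp [Polynomial.IsRoot, Polynomial.eval_add, Polynomial.eval_mul] at this
    linear_combination this
  obtain ⟨u2, u3, hsum, hprod⟩ := quad (s1 - u1) (s2 - u1 * (s1 - u1))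
  refine ⟨u1, u2, u3, by linear_combination -hsum, ?_, ?_⟩
  · linear_combination -u1 * hsum - hprod
  · linear_combination -hu1 - u1*hprod

/-- Given `e² = u² - 4`, there is `v ≠ 0` with `v + 1/v = u` and `v - 1/v = e`. -/
lemma halve (u e : ℂ) (he : e^2 = u^2 - 4) :
    ∃ v : ℂ, v ≠ 0 ∧ v + 1/v = u ∧ v - 1/v = e := by
  have h1 : ((u+e)/2) * ((u-e)/2) = 1 := by linear_combination -he/4
  have hne : (u+e)/2 ≠ 0 := left_ne_zero_of_mul_eq_one h1
  have hinv : 1 / ((u+e)/2) = (u-e)/2 := (eq_one_div_of_mul_eq_one_right h1).symm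
  exact ⟨(u+e)/2, hne, by rw [hinv]; ring, by rw [hinv]; ring⟩

/-- Every point of the hypersurface
`W = {(s1,s2,s3,t) ∈ ℂ⁴ : t²/4 - (s3/2 + 2s1)² + (s2+4)² = 0}` lies in the
image of the map `F : (ℂ*)³ → ℂ⁴` sending `(v1,v2,v3)` to `(s1,s2,s3,t)` with
`uᵢ = vᵢ + 1/vᵢ`, `s1 = u1+u2+u3`, `s2 = u1u2+u1u3+u2u3`, `s3 = u1u2u3`,
`t = (v1-1/v1)(v2-1/v2)(v3-1/v3)`. -/
theorem stmt_3 (s1 s2 s3 t : ℂ)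
    (hW : t ^ 2 / 4 - (s3 / 2 + 2 * s1) ^ 2 + (s2 + 4) ^ 2 = 0) :
    ∃ v1 v2 v3 : ℂ, v1 ≠ 0 ∧ v2 ≠ 0 ∧ v3 ≠ 0 ∧
      s1 = (v1 + 1 / v1) + (v2 + 1 / v2) + (v3 + 1 / v3) ∧
      s2 = (v1 + 1 / v1) * (v2 + 1 / v2) + (v1 + 1 / v1) * (v3 + 1 / v3)
            + (v2 + 1 / v2) * (v3 + 1 / v3) ∧
      s3 = (v1 + 1 / v1) * (v2 + 1 / v2) * (v3 + 1 / v3) ∧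
      t = (v1 - 1 / v1) * (v2 - 1 / v2) * (v3 - 1 / v3) := by
  obtain ⟨u1, u2, u3, hs1, hs2, hs3⟩ := cubic_roots s1 s2 s3
  obtain ⟨e1, he1⟩ := IsAlgClosed.exists_pow_nat_eq (k := ℂ) (u1^2 - 4) (n := 2) (by norm_num)
  obtain ⟨e2, he2⟩ := IsAlgClosed.exists_pow_nat_eq (k := ℂ) (u2^2 - 4) (n := 2) (by norm_num)
  obtain ⟨e3, he3⟩ := IsAlgClosed.exists_pow_nat_eq (k := ℂ) (u3^2 - 4) (n := 2) (by norm_num)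
  subst hs1 hs2 hs3
  have ht2 : t^2 = (e1*e2*e3)^2 := by
    linear_combination 4 * hW - e2^2*e3^2 * he1 - (u1^2-4)*e3^2 * he2
      - (u1^2-4)*(u2^2-4) * he3
  have hcases : t = e1*e2*e3 ∨ t = -(e1*e2*e3) := by
    have h0 : (t - e1*e2*e3) * (t + e1*e2*e3) = 0 := by linear_combination ht2
    rcases mul_eq_zero.mp h0 with h | h
    · left; linear_combination h
    · right; linear_combination h
  rcases hcases with ht | ht
  · obtain ⟨v1, h1n, h1a, h1b⟩ := halve u1 e1 he1
    obtain ⟨v2, h2n, h2a, h2b⟩ := halve u2 e2 he2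
    obtain ⟨v3, h3n, h3a, h3b⟩ := halve u3 e3 he3
    exact ⟨v1, v2, v3, h1n, h2n, h3n,
      by rw [h1a, h2a, h3a], by rw [h1a, h2a, h3a], by rw [h1a, h2a, h3a],
      by rw [h1b, h2b, h3b, ht]⟩
  · obtain ⟨v1, h1n, h1a, h1b⟩ := halve u1 (-e1) (by linear_combination he1)
    obtain ⟨v2, h2n, h2a, h2b⟩ := halve u2 e2 he2
    obtain ⟨v3, h3n, h3a, h3b⟩ := halve u3 e3 he3
    exact ⟨v1, v2, v3, h1n, h2n, h3n,
      by rw [h1a, h2a, h3a], by rw [h1a, h2a, h3a], by rw [h1a, h2a, h3a],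
      by rw [h1b, h2b, h3b, ht]; ring⟩
end

section
/- Let G be the subgroup of GL(3,Q) generated by all 3x3 permutation matrices together with all diagonal matrices with diagonal entries +1 or -1 having an even number of entries equal to -1. Then for k = 1, 2, 3, the subspace of the k-th exterior power of Q^3 fixed by the induced action of every element of G is zero. -/
open Matrix

/-- A `3×3` rational matrix is a permutation matrix. -/
def IsPermMatrix (A : Matrix (Fin 3) (Fin 3) ℚ) : Prop :=
  ∃ σ : Equiv.Perm (Fin 3), ∀ i j, A i j = if σ j = i then 1 else 0

/-- A `3×3` rational matrix is diagonal with entries `±1` and an even number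
of entries equal to `-1`. -/
def IsEvenSignDiag (A : Matrix (Fin 3) (Fin 3) ℚ) : Prop :=
  (∀ i j, i ≠ j → A i j = 0) ∧ (∀ i, A i i = 1 ∨ A i i = -1) ∧
    (Finset.univ.filter fun i => A i i = -1).card % 2 = 0

/-- The subgroup of `GL(3,ℚ)` generated by the permutation matrices and the
even diagonal sign matrices. -/
def stabGroup : Subgroup (Matrix (Fin 3) (Fin 3) ℚ)ˣ :=
  Subgroup.closure {g | IsPermMatrix (g : Matrix (Fin 3) (Fin 3) ℚ) ∨
    IsEvenSignDiag (g : Matrix (Fin 3) (Fin 3) ℚ)}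

namespace Stmt8Aux

abbrev M3 := Fin 3 → ℚ

def S1 : Matrix (Fin 3) (Fin 3) ℚ := !![-1,0,0; 0,-1,0; 0,0,1]
def S2 : Matrix (Fin 3) (Fin 3) ℚ := !![1,0,0; 0,-1,0; 0,0,-1]
def S3 : Matrix (Fin 3) (Fin 3) ℚ := !![-1,0,0; 0,1,0; 0,0,-1]
def T : Matrix (Fin 3) (Fin 3) ℚ := !![0,1,0; 1,0,0; 0,0,1]

lemma S1_sq : S1 * S1 = 1 := by
  rw [S1, Matrix.mul_fin_three, Matrix.one_fin_three]; norm_num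
lemma S2_sq : S2 * S2 = 1 := by
  rw [S2, Matrix.mul_fin_three, Matrix.one_fin_three]; norm_num
lemma S3_sq : S3 * S3 = 1 := by
  rw [S3, Matrix.mul_fin_three, Matrix.one_fin_three]; norm_num
lemma T_sq : T * T = 1 := by
  rw [T, Matrix.mul_fin_three, Matrix.one_fin_three]; norm_num

def uS1 : (Matrix (Fin 3) (Fin 3) ℚ)ˣ := ⟨S1, S1, S1_sq, S1_sq⟩
def uS2 : (Matrix (Fin 3) (Fin 3) ℚ)ˣ := ⟨S2, S2, S2_sq, S2_sq⟩
def uS3 : (Matrix (Fin 3) (Fin 3) ℚ)ˣ := ⟨S3, S3, S3_sq, S3_sq⟩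
def uT : (Matrix (Fin 3) (Fin 3) ℚ)ˣ := ⟨T, T, T_sq, T_sq⟩

lemma sign_mem (A : Matrix (Fin 3) (Fin 3) ℚ) (hod : ∀ i j, i ≠ j → A i j = 0)
    (hd : ∀ i, A i i = 1 ∨ A i i = -1)
    (hc : (Finset.univ.filter fun i => A i i = -1).card % 2 = 0)
    (u : (Matrix (Fin 3) (Fin 3) ℚ)ˣ) (hu : (u : Matrix (Fin 3) (Fin 3) ℚ) = A) :
    u ∈ stabGroup :=
  Subgroup.subset_closure (by rw [Set.mem_setOf_eq, hu]; exact Or.inr ⟨hod, hd, hc⟩)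

lemma uS1_mem : uS1 ∈ stabGroup := by
  refine sign_mem S1 ?_ ?_ ?_ _ rfl
  · intro i j h; fin_cases i <;> fin_cases j <;> simp_all [S1, Matrix.vecHead, Matrix.vecTail]
  · intro i; fin_cases i <;> simp [S1, Matrix.vecHead, Matrix.vecTail]
  · rw [show (Finset.univ.filter fun i => S1 i i = -1) = {0, 1} from by
      ext i; fin_cases i <;> simp [S1, Matrix.vecHead, Matrix.vecTail] <;> norm_num]
    rfl

lemma uS2_mem : uS2 ∈ stabGroup := by
  refine sign_mem S2 ?_ ?_ ?_ _ rfl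
  · intro i j h; fin_cases i <;> fin_cases j <;> simp_all [S2, Matrix.vecHead, Matrix.vecTail]
  · intro i; fin_cases i <;> simp [S2, Matrix.vecHead, Matrix.vecTail]
  · rw [show (Finset.univ.filter fun i => S2 i i = -1) = {1, 2} from by
      ext i; fin_cases i <;> simp [S2, Matrix.vecHead, Matrix.vecTail] <;> norm_num]
    rfl

lemma uS3_mem : uS3 ∈ stabGroup := by
  refine sign_mem S3 ?_ ?_ ?_ _ rfl
  · intro i j h; fin_cases i <;> fin_cases j <;> simp_all [S3, Matrix.vecHead, Matrix.vecTail]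
  · intro i; fin_cases i <;> simp [S3, Matrix.vecHead, Matrix.vecTail]
  · rw [show (Finset.univ.filter fun i => S3 i i = -1) = {0, 2} from by
      ext i; fin_cases i <;> simp [S3, Matrix.vecHead, Matrix.vecTail] <;> norm_num]
    rfl

lemma uT_mem : uT ∈ stabGroup := by
  refine Subgroup.subset_closure (Or.inl ⟨Equiv.swap 0 1, ?_⟩)
  intro i j
  fin_cases i <;> fin_cases j <;>
    simp [uT, T, Equiv.swap_apply_def, Matrix.vecHead, Matrix.vecTail]

noncomputable def E (i : Fin 3) : M3 := Pi.single i 1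
noncomputable def a (i : Fin 3) : ExteriorAlgebra ℚ M3 := ExteriorAlgebra.ι ℚ (E i)

lemma hw (w : M3) : w = w 0 • E 0 + w 1 • E 1 + w 2 • E 2 := by
  funext j; fin_cases j <;> simp [E, Pi.single_apply]

lemma ι_expand (w : M3) :
    ExteriorAlgebra.ι ℚ w = w 0 • a 0 + w 1 • a 1 + w 2 • a 2 := by
  conv_lhs => rw [hw w]
  simp [a, map_add, _root_.map_smul]

lemma toLin'_S1 (w : M3) :
    Matrix.toLin' S1 w = (-(w 0)) • E 0 + (-(w 1)) • E 1 + (w 2) • E 2 := by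
  funext j; fin_cases j <;>
    simp [S1, Matrix.toLin'_apply, Matrix.mulVec, dotProduct, Fin.sum_univ_three, E,
      Pi.single_apply, Matrix.vecHead, Matrix.vecTail]

lemma toLin'_S2 (w : M3) :
    Matrix.toLin' S2 w = (w 0) • E 0 + (-(w 1)) • E 1 + (-(w 2)) • E 2 := by
  funext j; fin_cases j <;>
    simp [S2, Matrix.toLin'_apply, Matrix.mulVec, dotProduct, Fin.sum_univ_three, E,
      Pi.single_apply, Matrix.vecHead, Matrix.vecTail]

lemma toLin'_S3 (w : M3) :
    Matrix.toLin' S3 w = (-(w 0)) • E 0 + (w 1) • E 1 + (-(w 2)) • E 2 := by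
  funext j; fin_cases j <;>
    simp [S3, Matrix.toLin'_apply, Matrix.mulVec, dotProduct, Fin.sum_univ_three, E,
      Pi.single_apply, Matrix.vecHead, Matrix.vecTail]

lemma toLin'_T (w : M3) :
    Matrix.toLin' T w = (w 1) • E 0 + (w 0) • E 1 + (w 2) • E 2 := by
  funext j; fin_cases j <;>
    simp [T, Matrix.toLin'_apply, Matrix.mulVec, dotProduct, Fin.sum_univ_three, E,
      Pi.single_apply, Matrix.vecHead, Matrix.vecTail]

lemma ι_S1 (w : M3) : ExteriorAlgebra.ι ℚ (Matrix.toLin' S1 w) =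
    (-(w 0)) • a 0 + (-(w 1)) • a 1 + (w 2) • a 2 := by
  rw [toLin'_S1]; simp [a, map_add, _root_.map_smul]

lemma ι_S2 (w : M3) : ExteriorAlgebra.ι ℚ (Matrix.toLin' S2 w) =
    (w 0) • a 0 + (-(w 1)) • a 1 + (-(w 2)) • a 2 := by
  rw [toLin'_S2]; simp [a, map_add, _root_.map_smul]

lemma ι_S3 (w : M3) : ExteriorAlgebra.ι ℚ (Matrix.toLin' S3 w) =
    (-(w 0)) • a 0 + (w 1) • a 1 + (-(w 2)) • a 2 := by
  rw [toLin'_S3]; simp [a, map_add, _root_.map_smul]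

lemma ι_T (w : M3) : ExteriorAlgebra.ι ℚ (Matrix.toLin' T w) =
    (w 1) • a 0 + (w 0) • a 1 + (w 2) • a 2 := by
  rw [toLin'_T]; simp [a, map_add, _root_.map_smul]

lemma sqE (i : Fin 3) : a i * a i = 0 := ExteriorAlgebra.ι_sq_zero _
lemma sqE' (i : Fin 3) (x : ExteriorAlgebra ℚ M3) : a i * (a i * x) = 0 := by
  rw [← mul_assoc, sqE, zero_mul]
lemma swp10 : a 1 * a 0 = -(a 0 * a 1) :=
  eq_neg_of_add_eq_zero_left (ExteriorAlgebra.ι_add_mul_swap _ _)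
lemma swp20 : a 2 * a 0 = -(a 0 * a 2) :=
  eq_neg_of_add_eq_zero_left (ExteriorAlgebra.ι_add_mul_swap _ _)
lemma swp21 : a 2 * a 1 = -(a 1 * a 2) :=
  eq_neg_of_add_eq_zero_left (ExteriorAlgebra.ι_add_mul_swap _ _)
lemma swp10' (x : ExteriorAlgebra ℚ M3) : a 1 * (a 0 * x) = -(a 0 * (a 1 * x)) := by
  rw [← mul_assoc, swp10, neg_mul, mul_assoc]
lemma swp20' (x : ExteriorAlgebra ℚ M3) : a 2 * (a 0 * x) = -(a 0 * (a 2 * x)) := by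
  rw [← mul_assoc, swp20, neg_mul, mul_assoc]
lemma swp21' (x : ExteriorAlgebra ℚ M3) : a 2 * (a 1 * x) = -(a 1 * (a 2 * x)) := by
  rw [← mul_assoc, swp21, neg_mul, mul_assoc]

lemma ιMulti1 (v : Fin 1 → M3) :
    (ExteriorAlgebra.ιMulti ℚ 1 v : ExteriorAlgebra ℚ M3) = ExteriorAlgebra.ι ℚ (v 0) := by
  simp [ExteriorAlgebra.ιMulti_apply, List.ofFn_succ]

lemma ιMulti2 (v : Fin 2 → M3) :
    (ExteriorAlgebra.ιMulti ℚ 2 v : ExteriorAlgebra ℚ M3)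
      = ExteriorAlgebra.ι ℚ (v 0) * ExteriorAlgebra.ι ℚ (v 1) := by
  simp [ExteriorAlgebra.ιMulti_apply, List.ofFn_succ, Matrix.vecTail, Function.comp,
    Fin.succ_zero_eq_one]

lemma ιMulti3 (v : Fin 3 → M3) :
    (ExteriorAlgebra.ιMulti ℚ 3 v : ExteriorAlgebra ℚ M3)
      = ExteriorAlgebra.ι ℚ (v 0) * (ExteriorAlgebra.ι ℚ (v 1) * ExteriorAlgebra.ι ℚ (v 2)) := by
  simp [ExteriorAlgebra.ιMulti_apply, List.ofFn_succ, mul_assoc, Matrix.vecTail, Function.comp,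
    Fin.succ_zero_eq_one, Fin.succ_one_eq_two]

noncomputable def L4 : ExteriorAlgebra ℚ M3 →ₗ[ℚ] ExteriorAlgebra ℚ M3 :=
  LinearMap.id + (ExteriorAlgebra.map (Matrix.toLin' S1)).toLinearMap
    + (ExteriorAlgebra.map (Matrix.toLin' S2)).toLinearMap
    + (ExteriorAlgebra.map (Matrix.toLin' S3)).toLinearMap

lemma L4_apply (y : ExteriorAlgebra ℚ M3) :
    L4 y = y + ExteriorAlgebra.map (Matrix.toLin' S1) y + ExteriorAlgebra.map (Matrix.toLin' S2) y
      + ExteriorAlgebra.map (Matrix.toLin' S3) y := rfl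

noncomputable def L2 : ExteriorAlgebra ℚ M3 →ₗ[ℚ] ExteriorAlgebra ℚ M3 :=
  LinearMap.id + (ExteriorAlgebra.map (Matrix.toLin' T)).toLinearMap

lemma L2_apply (y : ExteriorAlgebra ℚ M3) :
    L2 y = y + ExteriorAlgebra.map (Matrix.toLin' T) y := rfl

lemma sum1 (x : ExteriorAlgebra ℚ M3) (hx : x ∈ ⋀[ℚ]^1 M3) :
    x + ExteriorAlgebra.map (Matrix.toLin' S1) x + ExteriorAlgebra.map (Matrix.toLin' S2) x
      + ExteriorAlgebra.map (Matrix.toLin' S3) x = 0 := by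
  rw [← ExteriorAlgebra.ιMulti_span_fixedDegree] at hx
  rw [← L4_apply]
  induction hx using Submodule.span_induction with
  | mem y hy =>
    obtain ⟨v, rfl⟩ := hy
    rw [L4_apply, ιMulti1]
    simp only [ExteriorAlgebra.map_apply_ι]
    rw [ι_expand, ι_S1, ι_S2, ι_S3]
    module
  | zero => simp
  | add y z hy hz ihy ihz => rw [map_add, ihy, ihz, add_zero]
  | smul r y hy ih => rw [_root_.map_smul, ih, smul_zero]

lemma sum2 (x : ExteriorAlgebra ℚ M3) (hx : x ∈ ⋀[ℚ]^2 M3) :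
    x + ExteriorAlgebra.map (Matrix.toLin' S1) x + ExteriorAlgebra.map (Matrix.toLin' S2) x
      + ExteriorAlgebra.map (Matrix.toLin' S3) x = 0 := by
  rw [← ExteriorAlgebra.ιMulti_span_fixedDegree] at hx
  rw [← L4_apply]
  induction hx using Submodule.span_induction with
  | mem y hy =>
    obtain ⟨v, rfl⟩ := hy
    rw [L4_apply, ιMulti2]
    simp only [_root_.map_mul, ExteriorAlgebra.map_apply_ι]
    rw [ι_expand (v 0), ι_expand (v 1), ι_S1 (v 0), ι_S1 (v 1), ι_S2 (v 0), ι_S2 (v 1),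
      ι_S3 (v 0), ι_S3 (v 1)]
    simp only [add_mul, mul_add, smul_mul_assoc, mul_smul_comm, smul_smul, sqE, smul_zero,
      add_zero, zero_add]
    module
  | zero => simp
  | add y z hy hz ihy ihz => rw [map_add, ihy, ihz, add_zero]
  | smul r y hy ih => rw [_root_.map_smul, ih, smul_zero]

lemma sum3 (x : ExteriorAlgebra ℚ M3) (hx : x ∈ ⋀[ℚ]^3 M3) :
    x + ExteriorAlgebra.map (Matrix.toLin' T) x = 0 := by
  rw [← ExteriorAlgebra.ιMulti_span_fixedDegree] at hx
  rw [← L2_apply]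
  induction hx using Submodule.span_induction with
  | mem y hy =>
    obtain ⟨v, rfl⟩ := hy
    rw [L2_apply, ιMulti3]
    simp only [_root_.map_mul, ExteriorAlgebra.map_apply_ι]
    rw [ι_expand (v 0), ι_expand (v 1), ι_expand (v 2), ι_T (v 0), ι_T (v 1), ι_T (v 2)]
    simp only [add_mul, mul_add, smul_mul_assoc, mul_smul_comm, smul_smul, mul_assoc]
    simp only [sqE, sqE', swp10, swp10', swp20, swp20', swp21, swp21', mul_neg, neg_neg,
      smul_neg, smul_zero, mul_zero, add_zero, zero_add]
    module
  | zero => simp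
  | add y z hy hz ihy ihz => rw [map_add, ihy, ihz, add_zero]
  | smul r y hy ih => rw [_root_.map_smul, ih, smul_zero]

end Stmt8Aux

open Stmt8Aux in
/-- For `k = 1, 2, 3`, the subspace of `⋀^k ℚ³` fixed by the induced action
of every element of `stabGroup` is zero. -/
theorem stmt_8 (k : ℕ) (hk1 : 1 ≤ k) (hk3 : k ≤ 3)
    (x : ExteriorAlgebra ℚ (Fin 3 → ℚ)) (hx : x ∈ ⋀[ℚ]^k (Fin 3 → ℚ))
    (hfix : ∀ g ∈ stabGroup,
      ExteriorAlgebra.map (Matrix.toLin' (g : Matrix (Fin 3) (Fin 3) ℚ)) x = x) :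
    x = 0 := by
  have h1 : ExteriorAlgebra.map (Matrix.toLin' S1) x = x := hfix uS1 uS1_mem
  have h2 : ExteriorAlgebra.map (Matrix.toLin' S2) x = x := hfix uS2 uS2_mem
  have h3 : ExteriorAlgebra.map (Matrix.toLin' S3) x = x := hfix uS3 uS3_mem
  have hT : ExteriorAlgebra.map (Matrix.toLin' T) x = x := hfix uT uT_mem
  interval_cases k
  · have hs := sum1 x hx
    rw [h1, h2, h3] at hs
    have h4 : (4 : ℚ) • x = 0 := by rw [show (4:ℚ) • x = x + x + x + x by module]; exact hs
    exact (smul_eq_zero.mp h4).resolve_left (by norm_num)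
  · have hs := sum2 x hx
    rw [h1, h2, h3] at hs
    have h4 : (4 : ℚ) • x = 0 := by rw [show (4:ℚ) • x = x + x + x + x by module]; exact hs
    exact (smul_eq_zero.mp h4).resolve_left (by norm_num)
  · have hs := sum3 x hx
    rw [hT] at hs
    have h4 : (2 : ℚ) • x = 0 := by rw [show (2:ℚ) • x = x + x by module]; exact hs
    exact (smul_eq_zero.mp h4).resolve_left (by norm_num)
end

section
/- Let G be the subgroup of GL(3,Q) generated by all permutation matrices and all diagonal sign matrices with an even number of -1 entries. If two points (v1,v2,v3) and (w1,w2,w3) of (C*)^3 have the same image under the map F(v1,v2,v3) = (s1,s2,s3,t) (where u_i = v_i + 1/v_i, s1, s2, s3 are the elementary symmetric functions of u1, u2, u3, and t = (v1-1/v1)(v2-1/v2)(v3-1/v3)), then (w1,w2,w3) is obtained from (v1,v2,v3) by a permutation of the coordinates composed with inversion v_i -> 1/v_i applied to an even number of coordinates. -/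

private lemma quad_aux {a b c d : ℂ} (h1 : a + b = c + d) (h2 : a * b = c * d) :
    c = a ∨ c = b := by
  have h : (c - a) * (c - b) = 0 := by linear_combination (-c) * h1 + h2
  rcases mul_eq_zero.mp h with h | h
  · exact Or.inl (by linear_combination h)
  · exact Or.inr (by linear_combination h)

private lemma cubic_aux {a b c a' b' c' : ℂ}
    (h1 : a + b + c = a' + b' + c')
    (h2 : a * b + a * c + b * c = a' * b' + a' * c' + b' * c')
    (h3 : a * b * c = a' * b' * c') :
    a' = a ∨ a' = b ∨ a' = c := by
  have h : (a' - a) * (a' - b) * (a' - c) = 0 := by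
    linear_combination (-(a' ^ 2)) * h1 + a' * h2 - h3
  rcases mul_eq_zero.mp h with h | h
  · rcases mul_eq_zero.mp h with h | h
    · exact Or.inl (by linear_combination h)
    · exact Or.inr (Or.inl (by linear_combination h))
  · exact Or.inr (Or.inr (by linear_combination h))

private lemma key_perm {a b c a' b' c' : ℂ}
    (h1 : a + b + c = a' + b' + c')
    (h2 : a * b + a * c + b * c = a' * b' + a' * c' + b' * c')
    (h3 : a * b * c = a' * b' * c') :
    ∃ σ : Equiv.Perm (Fin 3),
      a' = ![a, b, c] (σ 0) ∧ b' = ![a, b, c] (σ 1) ∧ c' = ![a, b, c] (σ 2) := by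
  rcases cubic_aux h1 h2 h3 with ha | ha | ha
  · -- a' = a
    have hbc1 : b + c = b' + c' := by linear_combination h1 + ha
    have hbc2 : b * c = b' * c' := by linear_combination h2 - a' * hbc1 + (b + c) * ha
    rcases quad_aux hbc1 hbc2 with hb | hb
    · have hc : c' = c := by linear_combination -h1 - ha - hb
      exact ⟨⟨![0,1,2], ![0,1,2], by decide, by decide⟩, ha, hb, hc⟩
    · have hc : c' = b := by linear_combination -h1 - ha - hb
      exact ⟨⟨![0,2,1], ![0,2,1], by decide, by decide⟩, ha, hb, hc⟩
  · -- a' = b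
    have hbc1 : a + c = b' + c' := by linear_combination h1 + ha
    have hbc2 : a * c = b' * c' := by linear_combination h2 - a' * hbc1 + (a + c) * ha
    rcases quad_aux hbc1 hbc2 with hb | hb
    · have hc : c' = c := by linear_combination -h1 - ha - hb
      exact ⟨⟨![1,0,2], ![1,0,2], by decide, by decide⟩, ha, hb, hc⟩
    · have hc : c' = a := by linear_combination -h1 - ha - hb
      exact ⟨⟨![1,2,0], ![2,0,1], by decide, by decide⟩, ha, hb, hc⟩
  · -- a' = c
    have hbc1 : a + b = b' + c' := by linear_combination h1 + ha
    have hbc2 : a * b = b' * c' := by linear_combination h2 - a' * hbc1 + (a + b) * ha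
    rcases quad_aux hbc1 hbc2 with hb | hb
    · have hc : c' = b := by linear_combination -h1 - ha - hb
      exact ⟨⟨![2,0,1], ![1,2,0], by decide, by decide⟩, ha, hb, hc⟩
    · have hc : c' = a := by linear_combination -h1 - ha - hb
      exact ⟨⟨![2,1,0], ![2,1,0], by decide, by decide⟩, ha, hb, hc⟩

private lemma match_inv {x y : ℂ} (hx : x ≠ 0) (hy : y ≠ 0)
    (h : x + x⁻¹ = y + y⁻¹) : x = y ∨ x = y⁻¹ := by
  have hx1 : x * x⁻¹ = 1 := mul_inv_cancel₀ hx
  have hy1 : y * y⁻¹ = 1 := mul_inv_cancel₀ hy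
  have h2 : (x - y) * (x * y - 1) = 0 := by
    linear_combination x * y * h - y * hx1 + x * hy1
  rcases mul_eq_zero.mp h2 with h2 | h2
  · exact Or.inl (by linear_combination h2)
  · exact Or.inr (eq_inv_of_mul_eq_one_left (by linear_combination h2))


/-- If two points `v, w ∈ (ℂ*)³` have the same image under the map
`F(v1,v2,v3) = (s1,s2,s3,t)`, where `uᵢ = vᵢ + 1/vᵢ`, `s1, s2, s3` are the
elementary symmetric functions of `u1, u2, u3`, and
`t = (v1-1/v1)(v2-1/v2)(v3-1/v3)`, then `w` is obtained from `v` by a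
permutation of the coordinates composed with the inversion `vᵢ ↦ 1/vᵢ`
applied to an even number of coordinates. -/
theorem stmt_14 (v w : Fin 3 → ℂ) (hv : ∀ i, v i ≠ 0) (hw : ∀ i, w i ≠ 0)
    (hs1 : (v 0 + 1 / v 0) + (v 1 + 1 / v 1) + (v 2 + 1 / v 2)
         = (w 0 + 1 / w 0) + (w 1 + 1 / w 1) + (w 2 + 1 / w 2))
    (hs2 : (v 0 + 1 / v 0) * (v 1 + 1 / v 1) + (v 0 + 1 / v 0) * (v 2 + 1 / v 2)
            + (v 1 + 1 / v 1) * (v 2 + 1 / v 2)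
         = (w 0 + 1 / w 0) * (w 1 + 1 / w 1) + (w 0 + 1 / w 0) * (w 2 + 1 / w 2)
            + (w 1 + 1 / w 1) * (w 2 + 1 / w 2))
    (hs3 : (v 0 + 1 / v 0) * (v 1 + 1 / v 1) * (v 2 + 1 / v 2)
         = (w 0 + 1 / w 0) * (w 1 + 1 / w 1) * (w 2 + 1 / w 2))
    (ht : (v 0 - 1 / v 0) * (v 1 - 1 / v 1) * (v 2 - 1 / v 2)
        = (w 0 - 1 / w 0) * (w 1 - 1 / w 1) * (w 2 - 1 / w 2)) :
    ∃ (σ : Equiv.Perm (Fin 3)) (ε : Fin 3 → Bool),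
      (Finset.univ.filter fun i => ε i = true).card % 2 = 0 ∧
      ∀ i, w i = if ε i then (v (σ i))⁻¹ else v (σ i) := by
  classical
  simp only [one_div] at hs1 hs2 hs3 ht
  obtain ⟨σ, h0, h1, h2⟩ := key_perm hs1 hs2 hs3
  have hfv : ∀ j : Fin 3, ![v 0 + (v 0)⁻¹, v 1 + (v 1)⁻¹, v 2 + (v 2)⁻¹] j
      = v j + (v j)⁻¹ := by
    intro j; fin_cases j <;> rfl
  have hu : ∀ i, w i + (w i)⁻¹ = v (σ i) + (v (σ i))⁻¹ := by
    intro i; fin_cases i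
    exacts [h0.trans (hfv _), h1.trans (hfv _), h2.trans (hfv _)]
  have hchoice : ∀ i, ∃ b : Bool, w i = if b then (v (σ i))⁻¹ else v (σ i) := by
    intro i
    rcases match_inv (hw i) (hv (σ i)) (hu i) with h | h
    · exact ⟨false, h⟩
    · exact ⟨true, h⟩
  choose ε0 hε0 using hchoice
  by_cases hP : (v 0 - (v 0)⁻¹) * (v 1 - (v 1)⁻¹) * (v 2 - (v 2)⁻¹) = 0
  · -- degenerate case: some v j = (v j)⁻¹, parity can be fixed
    have hall : ∀ i : Fin 3, i = 0 ∨ i = 1 ∨ i = 2 := by decide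
    obtain ⟨j, hj⟩ : ∃ j, v j = (v j)⁻¹ := by
      rcases mul_eq_zero.mp hP with h | h
      · rcases mul_eq_zero.mp h with h | h
        · exact ⟨0, by linear_combination h⟩
        · exact ⟨1, by linear_combination h⟩
      · exact ⟨2, by linear_combination h⟩
    have hσj : σ (σ.symm j) = j := σ.apply_symm_apply j
    have hboth : v (σ (σ.symm j)) = (v (σ (σ.symm j)))⁻¹ := by rw [hσj]; exact hj
    have hw0 : w (σ.symm j) = v (σ (σ.symm j)) := by
      have h := hε0 (σ.symm j)
      cases hb : ε0 (σ.symm j) <;> rw [hb] at h <;>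
        simp only [if_true, if_false, Bool.false_eq_true, Bool.true_eq_false] at h
      · exact h
      · rw [h, ← hboth]
    have hwi0 : ∀ b : Bool, w (σ.symm j) = if b then (v (σ (σ.symm j)))⁻¹
        else v (σ (σ.symm j)) := by
      intro b
      cases b
      · simpa using hw0
      · simpa using hw0.trans hboth
    refine ⟨σ, fun i => if i = σ.symm j then
      (((ε0 0).xor ((ε0 1).xor (ε0 2))).xor (ε0 (σ.symm j))) else ε0 i, ?_, ?_⟩
    · rcases hall (σ.symm j) with h | h | h <;> rw [h] <;>
        rcases hb0 : ε0 0 <;> rcases hb1 : ε0 1 <;> rcases hb2 : ε0 2 <;>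
        simp only [Finset.card_filter, Fin.sum_univ_three, hb0, hb1, hb2] <;>
        decide
    · intro i
      beta_reduce
      by_cases hi : i = σ.symm j
      · subst hi
        rw [if_pos rfl]
        exact hwi0 _
      · rw [if_neg hi]
        exact hε0 i
  · -- nondegenerate case: parity of ε0 must already be even
    have hperm : (v (σ 0) - (v (σ 0))⁻¹) * (v (σ 1) - (v (σ 1))⁻¹)
        * (v (σ 2) - (v (σ 2))⁻¹)
        = (v 0 - (v 0)⁻¹) * (v 1 - (v 1)⁻¹) * (v 2 - (v 2)⁻¹) := by
      simpa [Fin.prod_univ_three] using Equiv.prod_comp σ (fun i => v i - (v i)⁻¹)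
    have hf : ∀ i, w i - (w i)⁻¹
        = (if ε0 i then (-1 : ℂ) else 1) * (v (σ i) - (v (σ i))⁻¹) := by
      intro i
      have h := hε0 i
      cases hb : ε0 i <;> rw [hb] at h <;>
        simp only [if_true, if_false, Bool.false_eq_true, Bool.true_eq_false] at h ⊢
      · rw [h]; ring
      · rw [h, inv_inv]; ring
    have key : (v 0 - (v 0)⁻¹) * (v 1 - (v 1)⁻¹) * (v 2 - (v 2)⁻¹)
        * (1 - (if ε0 0 then (-1 : ℂ) else 1) * (if ε0 1 then (-1 : ℂ) else 1)
            * (if ε0 2 then (-1 : ℂ) else 1)) = 0 := by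
      linear_combination ht
        + ((w 1 - (w 1)⁻¹) * (w 2 - (w 2)⁻¹)) * hf 0
        + ((if ε0 0 then (-1 : ℂ) else 1) * (v (σ 0) - (v (σ 0))⁻¹)
            * (w 2 - (w 2)⁻¹)) * hf 1
        + ((if ε0 0 then (-1 : ℂ) else 1) * (v (σ 0) - (v (σ 0))⁻¹)
            * (if ε0 1 then (-1 : ℂ) else 1) * (v (σ 1) - (v (σ 1))⁻¹)) * hf 2
        + ((if ε0 0 then (-1 : ℂ) else 1) * (if ε0 1 then (-1 : ℂ) else 1)
            * (if ε0 2 then (-1 : ℂ) else 1)) * hperm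
    rcases mul_eq_zero.mp key with h | hs
    · exact absurd h hP
    refine ⟨σ, ε0, ?_, hε0⟩
    rcases hb0 : ε0 0 <;> rcases hb1 : ε0 1 <;> rcases hb2 : ε0 2 <;>
      rw [hb0, hb1, hb2] at hs <;>
      simp only [if_true, if_false, Bool.false_eq_true, Bool.true_eq_false] at hs <;>
      first
        | (simp only [Finset.card_filter, Fin.sum_univ_three, hb0, hb1, hb2] <;> decide)
        | norm_num at hs
end
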